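/- Assume the McKay Conjecture holds for the prime p: for every finite group H and Sylow p-subgroup Q of H, μ_p(H) = μ_p(N_H(Q)). Let G be a finite group, P a Sylow p-subgroup of G, N = N_G(P), and let g ∈ G be an element whose conjugacy class in G has cardinality coprime to p and which centralizes P (i.e. P ≤ C_G(g)). Then μ_p(C_G(g)) = μ_p(C_N(g)), where C_N(g) = C_G(g) ∩ N. -/

import Mathlib

open CategoryTheory

/-- `mu p H` is the number of isomorphism classes of irreducible finite-dimensional
complex representations of `H` whose dimension is coprime to `p`. -/
noncomputable def mu (p : ℕ) (H : Type) [Group H] : ℕ :=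
  Nat.card {c : _root_.Quotient (isIsomorphicSetoid (FDRep ℂ H)) //
    ∃ V : FDRep ℂ H, Quotient.mk (isIsomorphicSetoid (FDRep ℂ H)) V = c ∧
      Simple V ∧ p.Coprime (Module.finrank ℂ V)}

section Aux

open CategoryTheory.Limits

/-- An additive equivalence of preadditive categories sends simple objects to simple objects. -/
lemma simple_obj_of_equiv {C D : Type*} [Category C] [Category D]
    [Preadditive C] [Preadditive D]
    (E : C ≌ D) [E.functor.Additive] (X : C) [Simple X] : Simple (E.functor.obj X) := by
  constructor
  intro Z f m
  set g : E.inverse.obj Z ⟶ X := E.inverse.map f ≫ E.unitInv.app X with hg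
  haveI : Mono g := mono_comp _ _
  have hmapf : E.inverse.map f = g ≫ E.unit.app X := by
    simp [hg]
  have h1 : f = 0 ↔ g = 0 := by
    constructor
    · intro hf; rw [hg, hf, E.inverse.map_zero, zero_comp]
    · intro hgz
      have : E.inverse.map f = 0 := by rw [hmapf, hgz, zero_comp]
      exact (E.inverse.map_eq_zero_iff).mp this
  have h2 : IsIso f ↔ IsIso g := by
    constructor
    · intro hf; rw [hg]; infer_instance
    · intro hgI
      have : IsIso (E.inverse.map f) := by rw [hmapf]; infer_instance
      exact isIso_of_reflects_iso f E.inverse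
  exact h2.trans ((Simple.mono_isIso_iff_nonzero g).trans (not_congr h1).symm)

/-- A multiplicative equivalence of monoids induces an equivalence of categories of
finite-dimensional representations. -/
noncomputable def resEquiv {H K : Type} [Monoid H] [Monoid K] (e : H ≃* K) :
    FDRep ℂ H ≌ FDRep ℂ K := by
  have eq1 : e.symm.toMonoidHom.comp e.toMonoidHom = MonoidHom.id H := by
    ext x; exact e.symm_apply_apply x
  have eq2 : e.toMonoidHom.comp e.symm.toMonoidHom = MonoidHom.id K := by
    ext x; exact e.apply_symm_apply x
  exact CategoryTheory.Equivalence.mk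
    (Action.res _ e.symm.toMonoidHom)
    (Action.res _ e.toMonoidHom)
    ((Action.resId _).symm ≪≫ eqToIso (congrArg _ eq1.symm) ≪≫
      (Action.resComp _ e.toMonoidHom e.symm.toMonoidHom).symm)
    ((Action.resComp _ e.symm.toMonoidHom e.toMonoidHom) ≪≫
      eqToIso (congrArg _ eq2) ≪≫ Action.resId _)

/-- `mu` is invariant under group isomorphism. -/
lemma mu_congr {p : ℕ} {H K : Type} [Group H] [Group K] (e : H ≃* K) : mu p H = mu p K := by
  let E := resEquiv e
  haveI hadd : E.functor.Additive :=
    inferInstanceAs (Action.res _ e.symm.toMonoidHom).Additive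
  haveI hadd' : E.inverse.Additive :=
    inferInstanceAs (Action.res _ e.toMonoidHom).Additive
  haveI hadd'' : E.symm.functor.Additive := hadd'
  let q : Quotient (isIsomorphicSetoid (FDRep ℂ H)) ≃ Quotient (isIsomorphicSetoid (FDRep ℂ K)) :=
  { toFun := Quotient.map E.functor.obj (fun V W h => Nonempty.map E.functor.mapIso h)
    invFun := Quotient.map E.inverse.obj (fun V W h => Nonempty.map E.inverse.mapIso h)
    left_inv := fun c => Quotient.inductionOn c fun V => Quotient.sound ⟨(E.unitIso.app V).symm⟩
    right_inv := fun c => Quotient.inductionOn c fun V => Quotient.sound ⟨E.counitIso.app V⟩ }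
  refine Nat.card_congr (Equiv.subtypeEquiv q fun c => ?_)
  constructor
  · rintro ⟨V, rfl, hS, hcop⟩
    haveI := hS
    exact ⟨E.functor.obj V, rfl, simple_obj_of_equiv E V, hcop⟩
  · rintro ⟨W, hW, hS, hcop⟩
    haveI := hS
    refine ⟨E.inverse.obj W, ?_, simple_obj_of_equiv E.symm W, hcop⟩
    apply q.injective
    rw [← hW]
    exact (Quotient.sound ⟨E.counitIso.app W⟩ :
      Quotient.mk (isIsomorphicSetoid (FDRep ℂ K)) (E.functor.obj (E.inverse.obj W))
        = Quotient.mk _ W)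

/-- If `P ≤ C`, then the normalizer of `P` viewed as a subgroup of `C` is `C ⊓ N_G(P)`
viewed as a subgroup of `C`. -/
lemma normalizer_subgroupOf_eq {G : Type} [Group G] {P C : Subgroup G} (h : P ≤ C) :
    Subgroup.normalizer ((P.subgroupOf C : Subgroup C) : Set C)
      = (C ⊓ Subgroup.normalizer (P : Set G)).subgroupOf C := by
  ext c
  rw [Subgroup.mem_subgroupOf, Subgroup.mem_inf, Subgroup.mem_normalizer_iff,
    Subgroup.mem_normalizer_iff]
  constructor
  · intro hc
    refine ⟨c.2, fun x => ?_⟩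
    by_cases hx : x ∈ C
    · simpa [Subgroup.mem_subgroupOf] using hc ⟨x, hx⟩
    · constructor
      · intro hxP; exact absurd (h hxP) hx
      · intro hxP
        have hmem : (↑c)⁻¹ * (↑c * x * (↑c)⁻¹) * ↑c ∈ C :=
          C.mul_mem (C.mul_mem (C.inv_mem c.2) (h hxP)) c.2
        rw [show (↑c : G)⁻¹ * (↑c * x * (↑c)⁻¹) * ↑c = x by group] at hmem
        exact absurd hmem hx
  · rintro ⟨-, hc⟩ x
    simpa [Subgroup.mem_subgroupOf] using hc (x : G)

end Aux

/-- Assuming the McKay Conjecture for `p`, if the conjugacy class of `g` in `G` has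
cardinality coprime to `p` and `P ≤ C_G(g)`, then `μ_p(C_G(g)) = μ_p(C_N(g))`, where
`C_N(g) = C_G(g) ∩ N` and `N = N_G(P)`. -/
theorem mu_centralizer_eq_of_mckay {p : ℕ} [Fact p.Prime]
    (MC : ∀ (H : Type) [Group H] [Fintype H] (Q : Sylow p H),
      mu p H = mu p (Subgroup.normalizer ((Q : Subgroup H) : Set H)))
    {G : Type} [Group G] [Fintype G] (P : Sylow p G) (g : G)
    (hclass : p.Coprime (Nat.card {h : G | IsConj g h}))
    (hcent : (P : Subgroup G) ≤ Subgroup.centralizer {g}) :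
    mu p (Subgroup.centralizer {g})
      = mu p (Subgroup.centralizer {g} ⊓ Subgroup.normalizer ((P : Subgroup G) : Set G) : Subgroup G) := by
  haveI : Fintype ↥(Subgroup.centralizer ({g} : Set G)) := Fintype.ofFinite _
  have h1 := MC ↥(Subgroup.centralizer ({g} : Set G)) (P.subtype hcent)
  rw [h1, Sylow.coe_subtype, normalizer_subgroupOf_eq hcent]
  exact mu_congr (Subgroup.subgroupOfEquivOfLe inf_le_left)
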